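/- For every real t > 0 and every real j > 0, ∫₀^{∞} exp( iωt − √2·e^{iπ/4}·ω^{1/2}·j ) dω = 2i · ∫₀^{∞} x · exp( −t x² − i√2·j·x ) dx. -/

import Mathlib

open Real Complex MeasureTheory Set Filter Topology

noncomputable def Sfun (t j θ x : ℝ) : ℂ :=
  Complex.I * t * Complex.exp (2*θ*Complex.I) * x^2 - (1+Complex.I) * j * Complex.exp (θ*Complex.I) * x

lemma Sfun_re (t j θ x : ℝ) : (Sfun t j θ x).re
    = -(t*Real.sin (2*θ))*x^2 - (Real.cos θ - Real.sin θ)*j*x := by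
  have e1 : Complex.exp (2*(θ:ℂ)*Complex.I)
      = (Real.cos (2*θ) : ℂ) + (Real.sin (2*θ) : ℂ)*Complex.I := by
    rw [show (2*(θ:ℂ)*Complex.I) = ((2*θ:ℝ):ℂ)*Complex.I by push_cast; ring,
      Complex.exp_mul_I, ← Complex.ofReal_cos, ← Complex.ofReal_sin]
  have e2 : Complex.exp ((θ:ℂ)*Complex.I)
      = (Real.cos θ : ℂ) + (Real.sin θ : ℂ)*Complex.I := by
    rw [Complex.exp_mul_I, ← Complex.ofReal_cos, ← Complex.ofReal_sin]
  unfold Sfun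
  rw [e1, e2]
  simp [Complex.sub_re, Complex.mul_re, Complex.add_re, Complex.mul_im, Complex.add_im, pow_two,
    Complex.cos_ofReal_re, Complex.sin_ofReal_re, Complex.cos_ofReal_im, Complex.sin_ofReal_im]
  rw [show ((2:ℂ)*(θ:ℂ)) = ((2*θ:ℝ):ℂ) by push_cast; ring, Complex.cos_ofReal_im, Complex.sin_ofReal_re]
  ring_nf

lemma norm_exp_mul_I (r : ℝ) : ‖Complex.exp (r*Complex.I)‖ = 1 := by
  simp [Complex.norm_exp]

lemma norm_exp_two_mul_I (θ : ℝ) : ‖Complex.exp (2*(θ:ℂ)*Complex.I)‖ = 1 := by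
  rw [show (2*(θ:ℂ)*Complex.I) = ((2*θ:ℝ):ℂ)*Complex.I by push_cast; ring]
  exact norm_exp_mul_I _

noncomputable def phi (t j θ x : ℝ) : ℂ :=
  Complex.exp (2*θ*Complex.I) * x * Complex.exp (Sfun t j θ x)

noncomputable def phi' (t j θ x : ℝ) : ℂ :=
  (2*Complex.I*Complex.exp (2*θ*Complex.I) * x
    + Complex.exp (2*θ*Complex.I) * x *
      (Complex.I*t*(2*Complex.I*Complex.exp (2*θ*Complex.I))*x^2
        - (1+Complex.I)*j*(Complex.I*Complex.exp (θ*Complex.I))*x))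
  * Complex.exp (Sfun t j θ x)

lemma norm_phi (t j θ x : ℝ) (hx : 0 ≤ x) :
    ‖phi t j θ x‖ = x * Real.exp ((Sfun t j θ x).re) := by
  unfold phi
  rw [norm_mul, norm_mul, norm_exp_two_mul_I,
    Complex.norm_exp]
  simp [_root_.abs_of_nonneg hx]

lemma norm_phi'_le (t j θ x : ℝ) (ht : 0 ≤ t) (hj : 0 ≤ j) (hx : 0 ≤ x) :
    ‖phi' t j θ x‖ ≤ (2*x + 2*t*x^3 + 2*j*x^2) * Real.exp ((Sfun t j θ x).re) := by
  unfold phi'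
  rw [norm_mul, Complex.norm_exp]
  refine mul_le_mul_of_nonneg_right ?_ (Real.exp_pos _).le
  refine (norm_add_le _ _).trans ?_
  have hxn : ‖(x:ℂ)‖ = x := by simp [_root_.abs_of_nonneg hx]
  have htn : ‖(t:ℂ)‖ = t := by simp [_root_.abs_of_nonneg ht]
  have hjn : ‖(j:ℂ)‖ = j := by simp [_root_.abs_of_nonneg hj]
  have h1 : ‖2*Complex.I*Complex.exp (2*(θ:ℂ)*Complex.I) * (x:ℂ)‖ = 2*x := by
    simp only [norm_mul, norm_exp_two_mul_I, Complex.norm_I, hxn]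
    norm_num
  have ha : ‖Complex.I*(t:ℂ)*(2*Complex.I*Complex.exp (2*(θ:ℂ)*Complex.I))*(x:ℂ)^2‖ = 2*t*x^2 := by
    simp only [norm_mul, norm_pow, norm_exp_two_mul_I, Complex.norm_I, hxn, htn,
      Complex.norm_ofNat]
    ring
  have hb : ‖(1+Complex.I)*(j:ℂ)*(Complex.I*Complex.exp ((θ:ℂ)*Complex.I))*(x:ℂ)‖ ≤ 2*j*x := by
    have h1I : ‖(1:ℂ)+Complex.I‖ ≤ 2 := by
      refine (norm_add_le _ _).trans ?_
      simp
      norm_num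
    simp only [norm_mul, norm_exp_mul_I, Complex.norm_I, hxn, hjn, mul_one, one_mul]
    gcongr
  have h2 : ‖Complex.exp (2*(θ:ℂ)*Complex.I) * (x:ℂ) *
      (Complex.I*t*(2*Complex.I*Complex.exp (2*(θ:ℂ)*Complex.I))*(x:ℂ)^2
        - (1+Complex.I)*j*(Complex.I*Complex.exp ((θ:ℂ)*Complex.I))*(x:ℂ))‖
      ≤ x * (2*t*x^2 + 2*j*x) := by
    rw [norm_mul, norm_mul, norm_exp_two_mul_I, one_mul, hxn]
    refine mul_le_mul_of_nonneg_left ((norm_sub_le _ _).trans ?_) hx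
    rw [ha]
    exact add_le_add le_rfl hb
  rw [h1]
  refine (add_le_add le_rfl h2).trans ?_
  nlinarith

lemma aux_gauss (n : ℕ) {b : ℝ} (hb : 0 < b) (a : ℝ) :
    IntegrableOn (fun x => x ^ n * Real.exp (-b * x ^ 2 + a * x)) (Ioi 0) := by
  have hg : IntegrableOn
      (fun x : ℝ => Real.exp (a^2/(2*b)) * (x ^ (n:ℝ) * Real.exp (-(b/2) * x ^ 2))) (Ioi 0) :=
    (integrableOn_rpow_mul_exp_neg_mul_sq (by positivity) (by exact_mod_cast neg_one_lt_zero.trans_le (Nat.cast_nonneg n))).const_mul _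
  refine hg.mono' ?_ ?_
  · exact ((continuous_pow n).mul ((Continuous.rexp (by continuity)))).aestronglyMeasurable.restrict
  · filter_upwards [ae_restrict_mem measurableSet_Ioi] with x hx
    have hx0 : (0:ℝ) < x := hx
    have hxp : (0:ℝ) ≤ x ^ n := pow_nonneg hx0.le n
    rw [Real.norm_eq_abs, abs_mul, _root_.abs_of_nonneg hxp, _root_.abs_of_nonneg (Real.exp_pos _).le,
      Real.rpow_natCast]
    have hexp : Real.exp (-b * x ^ 2 + a * x) ≤ Real.exp (a^2/(2*b)) * Real.exp (-(b/2) * x ^ 2) := by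
      rw [← Real.exp_add]
      apply Real.exp_le_exp.mpr
      have h : a * x - (b/2)*x^2 ≤ a^2/(2*b) := by
        rw [le_div_iff₀ (by positivity)]
        nlinarith [sq_nonneg (b*x - a)]
      linarith
    calc x ^ n * Real.exp (-b * x ^ 2 + a * x)
        ≤ x ^ n * (Real.exp (a^2/(2*b)) * Real.exp (-(b/2) * x ^ 2)) :=
          mul_le_mul_of_nonneg_left hexp hxp
      _ = Real.exp (a^2/(2*b)) * (x ^ n * Real.exp (-(b/2) * x ^ 2)) := by ring

lemma aux_lin {a : ℝ} (ha : 0 < a) :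
    IntegrableOn (fun x => x * Real.exp (-a*x)) (Ioi 0) := by
  have hg : IntegrableOn (fun x : ℝ => (2/a) * Real.exp (-(a/2) * x)) (Ioi 0) :=
    (exp_neg_integrableOn_Ioi 0 (by positivity)).const_mul _
  refine hg.mono' ?_ ?_
  · exact (continuous_id.mul (Continuous.rexp (by continuity))).aestronglyMeasurable.restrict
  · filter_upwards [ae_restrict_mem measurableSet_Ioi] with x hx
    have hx0 : (0:ℝ) < x := hx
    rw [Real.norm_eq_abs, abs_mul, _root_.abs_of_nonneg hx0.le,
      _root_.abs_of_nonneg (Real.exp_pos _).le]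
    have h1 : (a/2)*x ≤ Real.exp ((a/2)*x) := by
      have := Real.add_one_le_exp ((a/2)*x); linarith
    have h2 : x ≤ (2/a) * Real.exp ((a/2)*x) := by
      have := mul_le_mul_of_nonneg_left h1 (by positivity : (0:ℝ) ≤ 2/a)
      calc x = (2/a) * ((a/2)*x) := by field_simp
        _ ≤ (2/a) * Real.exp ((a/2)*x) := this
    calc x * Real.exp (-a*x) ≤ ((2/a) * Real.exp ((a/2)*x)) * Real.exp (-a*x) :=
          mul_le_mul_of_nonneg_right h2 (Real.exp_pos _).le
      _ = (2/a) * Real.exp (-(a/2) * x) := by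
          rw [mul_assoc, ← Real.exp_add]; ring_nf

-- derivative in θ
lemma hasDerivAt_phi_theta (t j θ x : ℝ) :
    HasDerivAt (fun θ => phi t j θ x) (phi' t j θ x) θ := by
  have h0 : HasDerivAt (fun θ : ℝ => (θ : ℂ)) 1 θ := hasDerivAt_id θ |>.ofReal_comp
  have h1 : HasDerivAt (fun θ : ℝ => Complex.exp (2*θ*Complex.I)) (2*Complex.I*Complex.exp (2*θ*Complex.I)) θ := by
    have : HasDerivAt (fun θ : ℝ => 2*(θ:ℂ)*Complex.I) (2*Complex.I) θ := by
      simpa [mul_comm, mul_assoc] using (h0.const_mul 2).mul_const Complex.I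
    simpa [mul_comm] using this.cexp
  have h2 : HasDerivAt (fun θ : ℝ => Complex.exp (θ*Complex.I)) (Complex.I*Complex.exp (θ*Complex.I)) θ := by
    have : HasDerivAt (fun θ : ℝ => (θ:ℂ)*Complex.I) Complex.I θ := by
      simpa using h0.mul_const Complex.I
    simpa [mul_comm] using this.cexp
  have hS : HasDerivAt (fun θ => Sfun t j θ x)
      (Complex.I*t*(2*Complex.I*Complex.exp (2*θ*Complex.I))*x^2
        - (1+Complex.I)*j*(Complex.I*Complex.exp (θ*Complex.I))*x) θ := by
    have ha : HasDerivAt (fun θ : ℝ => Complex.I * t * Complex.exp (2*θ*Complex.I) * (x:ℂ)^2)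
        (Complex.I*t*(2*Complex.I*Complex.exp (2*θ*Complex.I))*x^2) θ := by
      simpa [mul_assoc] using ((h1.const_mul (Complex.I * t)).mul_const ((x:ℂ)^2))
    have hb : HasDerivAt (fun θ : ℝ => (1+Complex.I) * j * Complex.exp (θ*Complex.I) * (x:ℂ))
        ((1+Complex.I)*j*(Complex.I*Complex.exp (θ*Complex.I))*x) θ := by
      simpa [mul_assoc] using ((h2.const_mul ((1+Complex.I) * j)).mul_const ((x:ℂ)))
    exact ha.sub hb
  have := (h1.mul_const ((x:ℂ))).mul hS.cexp
  unfold phi phi'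
  exact this.congr_deriv (by ring)

-- derivative in x of I * x * phi
lemma hasDerivAt_phi_x (t j θ x : ℝ) :
    HasDerivAt (fun x : ℝ => Complex.I * x * phi t j θ x) (phi' t j θ x) x := by
  have h0 : HasDerivAt (fun x : ℝ => (x : ℂ)) 1 x := hasDerivAt_id x |>.ofReal_comp
  have hS : HasDerivAt (fun x => Sfun t j θ x)
      (Complex.I*t*Complex.exp (2*θ*Complex.I)*(2*x)
        - (1+Complex.I)*j*Complex.exp (θ*Complex.I)) x := by
    have ha : HasDerivAt (fun x : ℝ => Complex.I * t * Complex.exp (2*θ*Complex.I) * (x:ℂ)^2)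
        (Complex.I*t*Complex.exp (2*θ*Complex.I)*(2*x)) x := by
      have hp : HasDerivAt (fun x : ℝ => (x:ℂ)^2) (2*x) x := by
        have := h0.mul h0
        simp only [pow_two]
        exact this.congr_deriv (by push_cast; ring)
      simpa [mul_assoc] using hp.const_mul (Complex.I * t * Complex.exp (2*θ*Complex.I))
    have hb : HasDerivAt (fun x : ℝ => (1+Complex.I) * j * Complex.exp (θ*Complex.I) * (x:ℂ))
        ((1+Complex.I)*j*Complex.exp (θ*Complex.I)) x := by
      simpa using h0.const_mul ((1+Complex.I) * j * Complex.exp (θ*Complex.I))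
    exact ha.sub hb
  have hsq : HasDerivAt (fun x : ℝ => Complex.I * Complex.exp (2*θ*Complex.I) * (x:ℂ)^2)
      (Complex.I * Complex.exp (2*θ*Complex.I) * (2*x)) x := by
    have hp : HasDerivAt (fun x : ℝ => (x:ℂ)^2) (2*x) x := by
      have := h0.mul h0
      simp only [pow_two]
      exact this.congr_deriv (by push_cast; ring)
    simpa [mul_assoc] using hp.const_mul (Complex.I * Complex.exp (2*θ*Complex.I))
  have := hsq.mul hS.cexp
  have heq : (fun x : ℝ => Complex.I * x * phi t j θ x)
      = fun x : ℝ => Complex.I * Complex.exp (2*θ*Complex.I) * (x:ℂ)^2 * Complex.exp (Sfun t j θ x) := by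
    funext y; unfold phi; ring
  rw [heq]
  exact this.congr_deriv (by unfold phi' Sfun; ring)

lemma cont_phi_x (t j θ : ℝ) : Continuous (fun x => phi t j θ x) := by
  unfold phi Sfun
  fun_prop

lemma cont_phi'_x (t j θ : ℝ) : Continuous (fun x => phi' t j θ x) := by
  unfold phi' Sfun
  fun_prop

lemma cont_phi_theta (t j x : ℝ) : Continuous (fun θ => phi t j θ x) := by
  unfold phi Sfun
  fun_prop

lemma cos_sub_sin_bds (θ : ℝ) : -2 ≤ Real.cos θ - Real.sin θ ∧ Real.cos θ - Real.sin θ ≤ 2 := by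
  have h1 := Real.neg_one_le_cos θ
  have h2 := Real.cos_le_one θ
  have h3 := Real.neg_one_le_sin θ
  have h4 := Real.sin_le_one θ
  constructor <;> linarith

lemma Sfun_re_le (t j θ x : ℝ) (ht : 0 ≤ t) (hj : 0 ≤ j) (hx : 0 ≤ x) {m : ℝ}
    (hm : m ≤ Real.sin (2*θ)) :
    (Sfun t j θ x).re ≤ -(t*m) * x^2 + (2*j) * x := by
  rw [Sfun_re]
  have h1 : t * m * x^2 ≤ t * Real.sin (2*θ) * x^2 := by
    apply mul_le_mul_of_nonneg_right _ (sq_nonneg x)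
    exact mul_le_mul_of_nonneg_left hm ht
  have h2 : -(Real.cos θ - Real.sin θ) * j * x ≤ 2 * j * x := by
    have := (cos_sub_sin_bds θ).1
    have : -(Real.cos θ - Real.sin θ) ≤ 2 := by linarith
    have hjx : 0 ≤ j * x := mul_nonneg hj hx
    nlinarith
  nlinarith

lemma integrable_phi (t j θ : ℝ) (ht : 0 < t) (hj : 0 < j) (hθ : 0 < Real.sin (2*θ)) :
    IntegrableOn (fun x => phi t j θ x) (Ioi 0) := by
  have hg : IntegrableOn
      (fun x => x ^ 1 * Real.exp (-(t * Real.sin (2*θ)) * x ^ 2 + (2*j) * x)) (Ioi 0) :=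
    aux_gauss 1 (by positivity) (2*j)
  refine hg.mono' ((cont_phi_x t j θ).aestronglyMeasurable.restrict) ?_
  filter_upwards [ae_restrict_mem measurableSet_Ioi] with x hx
  have hx0 : (0:ℝ) < x := hx
  rw [norm_phi t j θ x hx0.le, pow_one]
  have := Sfun_re_le t j θ x ht.le hj.le hx0.le (le_refl (Real.sin (2*θ)))
  exact mul_le_mul_of_nonneg_left (Real.exp_le_exp.mpr this) hx0.le

lemma sin_lower (θ₀ θ : ℝ) (hθ₀ : θ₀ ∈ Ioc 0 (π/4)) (hθ : θ ∈ Metric.ball θ₀ (θ₀/2)) :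
    min (Real.sin θ₀) (Real.sqrt 2/2) ≤ Real.sin (2*θ) := by
  obtain ⟨h0, h4⟩ := hθ₀
  rw [Metric.mem_ball, Real.dist_eq, abs_lt] at hθ
  have hpi := Real.pi_pos
  have hu1 : θ₀ < 2*θ := by linarith
  have hu2 : 2*θ < 3*θ₀ := by linarith
  rcases le_or_gt (2*θ) (π/2) with hc | hc
  · refine le_trans (min_le_left _ _) ?_
    apply Real.sin_le_sin_of_le_of_le_pi_div_two (by linarith) hc hu1.le
  · refine le_trans (min_le_right _ _) ?_
    rw [← Real.sin_pi_sub]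
    rw [← Real.sin_pi_div_four]
    apply Real.sin_le_sin_of_le_of_le_pi_div_two (by linarith) (by linarith) (by linarith)

lemma key (t j : ℝ) (ht : 0 < t) (hj : 0 < j) {θ₀ : ℝ} (hθ : θ₀ ∈ Ioc 0 (π/4)) :
    IntegrableOn (phi' t j θ₀) (Ioi 0) ∧
      HasDerivAt (fun θ => ∫ x in Ioi 0, phi t j θ x) (∫ x in Ioi 0, phi' t j θ₀ x) θ₀ := by
  obtain ⟨h0, h4⟩ := hθ
  have hpi := Real.pi_pos
  set m := min (Real.sin θ₀) (Real.sqrt 2/2) with hm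
  have hmpos : 0 < m := by
    apply lt_min
    · apply Real.sin_pos_of_pos_of_lt_pi h0; linarith
    · positivity
  set bound : ℝ → ℝ := fun x => (2*x + 2*t*x^3 + 2*j*x^2) * Real.exp (-(t*m)*x^2 + (2*j)*x)
    with hbound
  have hsin0 : 0 < Real.sin (2*θ₀) := by
    apply Real.sin_pos_of_pos_of_lt_pi (by linarith); linarith
  refine hasDerivAt_integral_of_dominated_loc_of_deriv_le (s := Metric.ball θ₀ (θ₀/2)) (bound := bound) (Metric.ball_mem_nhds _ (by linarith))
    (Filter.Eventually.of_forall fun θ => (cont_phi_x t j θ).aestronglyMeasurable.restrict)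
    (integrable_phi t j θ₀ ht hj hsin0)
    ((cont_phi'_x t j θ₀).aestronglyMeasurable.restrict) ?_ ?_ ?_
  · filter_upwards [ae_restrict_mem measurableSet_Ioi] with x hx θ hθball
    have hx0 : (0:ℝ) < x := hx
    refine (norm_phi'_le t j θ x ht.le hj.le hx0.le).trans ?_
    apply mul_le_mul_of_nonneg_left _ (by positivity)
    apply Real.exp_le_exp.mpr
    exact Sfun_re_le t j θ x ht.le hj.le hx0.le (sin_lower θ₀ θ ⟨h0, h4⟩ hθball)
  · have : bound = fun x => 2*(x^1 * Real.exp (-(t*m)*x^2 + (2*j)*x))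
        + (2*t)*(x^3 * Real.exp (-(t*m)*x^2 + (2*j)*x))
        + (2*j)*(x^2 * Real.exp (-(t*m)*x^2 + (2*j)*x)) := by
      funext x; simp [hbound]; ring
    rw [this]
    have hB : (0:ℝ) < t*m := by positivity
    exact (((aux_gauss 1 hB (2*j)).const_mul 2).add
      ((aux_gauss 3 hB (2*j)).const_mul (2*t))).add ((aux_gauss 2 hB (2*j)).const_mul (2*j))
  · exact Filter.Eventually.of_forall fun x θ _ => hasDerivAt_phi_theta t j θ x

lemma integral_phi'_zero (t j : ℝ) (ht : 0 < t) (hj : 0 < j) {θ₀ : ℝ}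
    (hθ : θ₀ ∈ Ioc 0 (π/4)) (hint : IntegrableOn (phi' t j θ₀) (Ioi 0)) :
    ∫ x in Ioi 0, phi' t j θ₀ x = 0 := by
  obtain ⟨h0, h4⟩ := hθ
  have hpi := Real.pi_pos
  have hsin0 : 0 < Real.sin (2*θ₀) := by
    apply Real.sin_pos_of_pos_of_lt_pi (by linarith); linarith
  set g : ℝ → ℂ := fun x => Complex.I * x * phi t j θ₀ x with hg
  have hcont : ContinuousWithinAt g (Ici 0) 0 := by
    apply Continuous.continuousWithinAt
    exact (continuous_const.mul Complex.continuous_ofReal).mul (cont_phi_x t j θ₀)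
  have hderiv : ∀ x ∈ Ioi (0:ℝ), HasDerivAt g (phi' t j θ₀ x) x :=
    fun x _ => hasDerivAt_phi_x t j θ₀ x
  have hcos : 0 ≤ Real.cos θ₀ - Real.sin θ₀ := by
    have h1 : Real.sin θ₀ ≤ Real.sin (π/4) :=
      Real.sin_le_sin_of_le_of_le_pi_div_two (by linarith) (by linarith) h4
    have h2 : Real.cos (π/4) ≤ Real.cos θ₀ :=
      Real.cos_le_cos_of_nonneg_of_le_pi h0.le (by linarith) h4
    rw [Real.sin_pi_div_four] at h1
    rw [Real.cos_pi_div_four] at h2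
    linarith
  have htend : Tendsto g atTop (𝓝 0) := by
    set B := t * Real.sin (2*θ₀) with hB
    have hBpos : 0 < B := by positivity
    have hmaj : Tendsto (fun x : ℝ => x^2 * Real.exp (-B*x^2)) atTop (𝓝 0) := by
      have h1 : Tendsto (fun u : ℝ => (1/B) * (u * Real.exp (-u))) atTop (𝓝 0) := by
        have := (Real.tendsto_pow_mul_exp_neg_atTop_nhds_zero 1).const_mul (1/B)
        simpa using this
      have h2 : Tendsto (fun x : ℝ => B*x^2) atTop atTop := by
        apply Tendsto.const_mul_atTop hBpos
        exact tendsto_pow_atTop two_ne_zero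
      have := h1.comp h2
      convert this using 2 with x
      simp only [Function.comp]
      field_simp
    rw [tendsto_zero_iff_norm_tendsto_zero]
    apply squeeze_zero_norm' _ hmaj
    filter_upwards [eventually_ge_atTop (0:ℝ)] with x hx
    have : ‖g x‖ = x * (x * Real.exp ((Sfun t j θ₀ x).re)) := by
      rw [hg]
      simp only [norm_mul, Complex.norm_I, one_mul, norm_phi t j θ₀ x hx]
      simp [_root_.abs_of_nonneg hx]
    rw [norm_norm, this]
    have hre : (Sfun t j θ₀ x).re ≤ -B * x^2 := by
      rw [Sfun_re]
      have : 0 ≤ (Real.cos θ₀ - Real.sin θ₀) * j * x := by positivity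
      nlinarith
    calc x * (x * Real.exp ((Sfun t j θ₀ x).re)) ≤ x * (x * Real.exp (-B*x^2)) := by
          have := Real.exp_le_exp.mpr hre
          nlinarith [Real.exp_pos ((Sfun t j θ₀ x).re)]
      _ = x^2 * Real.exp (-B*x^2) := by ring
  have := integral_Ioi_of_hasDerivAt_of_tendsto hcont hderiv hint htend
  simpa [hg] using this

lemma G_const (t j : ℝ) (ht : 0 < t) (hj : 0 < j) :
    (∫ x in Ioi (0:ℝ), phi t j 0 x) = ∫ x in Ioi (0:ℝ), phi t j (π/4) x := by
  have hpi := Real.pi_pos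
  set G : ℝ → ℂ := fun θ => ∫ x in Ioi 0, phi t j θ x with hGdef
  have hG : ∀ θ ∈ Ioc 0 (π/4), HasDerivAt G 0 θ := by
    intro θ hθ
    obtain ⟨hint, hd⟩ := key t j ht hj hθ
    rwa [integral_phi'_zero t j ht hj hθ hint] at hd
  -- G is constant on (0, π/4]
  have hconst : ∀ δ ∈ Ioc 0 (π/4), G (π/4) = G δ := by
    intro δ hδ
    have hc : ContinuousOn G (Icc δ (π/4)) := by
      intro y hy
      exact (hG y ⟨lt_of_lt_of_le hδ.1 hy.1, hy.2⟩).continuousAt.continuousWithinAt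
    have hd : ∀ y ∈ Ico δ (π/4), HasDerivWithinAt G 0 (Ici y) y := by
      intro y hy
      exact (hG y ⟨lt_of_lt_of_le hδ.1 hy.1, hy.2.le⟩).hasDerivWithinAt
    exact constant_of_has_deriv_right_zero hc hd (π/4) (right_mem_Icc.mpr hδ.2)
  -- continuity of G at 0 from the right
  have hb : 0 < Real.cos (π/8) - Real.sin (π/8) := by
    have h1 : Real.sin (π/8) = Real.cos (π/2 - π/8) := (Real.cos_pi_div_two_sub _).symm
    have h2 : Real.cos (π/2 - π/8) < Real.cos (π/8) := by
      apply Real.strictAntiOn_cos ⟨by linarith, by linarith⟩ ⟨by linarith, by linarith⟩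
      linarith
    linarith
  have hbound_int : IntegrableOn (fun x => x * Real.exp (-((Real.cos (π/8) - Real.sin (π/8))*j)*x)) (Ioi 0) :=
    aux_lin (by positivity)
  have htend : Tendsto G (𝓝[>] (0:ℝ)) (𝓝 (G 0)) := by
    apply tendsto_integral_filter_of_dominated_convergence
      (fun x => x * Real.exp (-((Real.cos (π/8) - Real.sin (π/8))*j)*x))
    · exact Filter.Eventually.of_forall fun θ => (cont_phi_x t j θ).aestronglyMeasurable.restrict
    · filter_upwards [Ioc_mem_nhdsGT (by positivity : (0:ℝ) < π/8)] with θ hθ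
      filter_upwards [ae_restrict_mem measurableSet_Ioi] with x hx
      have hx0 : (0:ℝ) < x := hx
      rw [norm_phi t j θ x hx0.le]
      apply mul_le_mul_of_nonneg_left _ hx0.le
      apply Real.exp_le_exp.mpr
      rw [Sfun_re]
      have hsin2 : 0 ≤ Real.sin (2*θ) := by
        apply Real.sin_nonneg_of_nonneg_of_le_pi (by linarith [hθ.1]) (by linarith [hθ.2])
      have hcos : Real.cos (π/8) ≤ Real.cos θ :=
        Real.cos_le_cos_of_nonneg_of_le_pi hθ.1.le (by linarith) hθ.2
      have hsin : Real.sin θ ≤ Real.sin (π/8) :=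
        Real.sin_le_sin_of_le_of_le_pi_div_two (by linarith [hθ.1]) (by linarith) hθ.2
      have h1 : 0 ≤ t * Real.sin (2*θ) * x^2 := by positivity
      have h2 : ((Real.cos (π/8) - Real.sin (π/8))) * (j*x) ≤ (Real.cos θ - Real.sin θ) * (j*x) := by
        apply mul_le_mul_of_nonneg_right (by linarith) (by positivity)
      nlinarith
    · exact hbound_int
    · filter_upwards [ae_restrict_mem measurableSet_Ioi] with x _
      exact ((cont_phi_theta t j x).tendsto 0).mono_left nhdsWithin_le_nhds
  have heventually : ∀ᶠ θ in 𝓝[>] (0:ℝ), G θ = G (π/4) := by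
    filter_upwards [Ioc_mem_nhdsGT (by positivity : (0:ℝ) < π/8)] with θ hθ
    exact (hconst θ ⟨hθ.1, by linarith [hθ.2]⟩).symm
  have htend' : Tendsto G (𝓝[>] (0:ℝ)) (𝓝 (G (π/4))) := by
    rw [tendsto_congr' heventually]
    exact tendsto_const_nhds
  exact tendsto_nhds_unique htend htend'

lemma phi_zero (t j x : ℝ) :
    phi t j 0 x = (x:ℂ) * Complex.exp (Complex.I*t*x^2 - (1+Complex.I)*j*x) := by
  unfold phi Sfun
  norm_num

lemma exp_pi_div_four_I : Complex.exp (((π/4:ℝ):ℂ)*Complex.I)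
    = (Real.sqrt 2/2 : ℝ) * (1 + Complex.I) := by
  rw [Complex.exp_mul_I, ← Complex.ofReal_cos, ← Complex.ofReal_sin,
    Real.cos_pi_div_four, Real.sin_pi_div_four]
  push_cast
  ring

lemma phi_pi_four (t j x : ℝ) :
    phi t j (π/4) x = Complex.I * ((x:ℂ) *
      Complex.exp (-(t:ℂ)*x^2 - Complex.I*(Real.sqrt 2:ℝ)*j*x)) := by
  unfold phi Sfun
  have e1 : (2:ℂ)*((π/4:ℝ):ℂ)*Complex.I = ((π/2:ℝ):ℂ)*Complex.I := by push_cast; ring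
  have e2 : Complex.exp (((π/2:ℝ):ℂ)*Complex.I) = Complex.I := by
    rw [Complex.exp_mul_I, ← Complex.ofReal_cos, ← Complex.ofReal_sin,
      Real.cos_pi_div_two, Real.sin_pi_div_two]
    push_cast; ring
  rw [e1, e2, exp_pi_div_four_I]
  have harg : Complex.I * (t:ℂ) * Complex.I * (x:ℂ)^2
      - (1+Complex.I) * (j:ℂ) * (((Real.sqrt 2/2 : ℝ):ℂ) * (1 + Complex.I)) * (x:ℂ)
      = -(t:ℂ)*(x:ℂ)^2 - Complex.I*((Real.sqrt 2:ℝ):ℂ)*(j:ℂ)*(x:ℂ) := by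
    push_cast
    linear_combination ((t:ℂ)*(x:ℂ)^2 - ((Real.sqrt 2:ℝ):ℂ)/2*(j:ℂ)*(x:ℂ)) * Complex.I_sq
  rw [harg]
  ring

lemma sqrt_two_exp : (Real.sqrt 2 : ℂ) * Complex.exp (Complex.I * (π:ℝ) / 4) = 1 + Complex.I := by
  have e1 : Complex.I * (π:ℝ) / 4 = ((π/4:ℝ):ℂ)*Complex.I := by push_cast; ring
  rw [e1, exp_pi_div_four_I]
  have h2 : ((Real.sqrt 2:ℝ):ℂ) * ((Real.sqrt 2:ℝ):ℂ) = 2 := by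
    norm_cast
    exact Real.mul_self_sqrt (by norm_num)
  push_cast
  linear_combination (1+Complex.I)/2 * h2

theorem stmt_15 (t j : ℝ) (ht : 0 < t) (hj : 0 < j) :
    ∫ ω in Set.Ioi (0:ℝ),
        Complex.exp (Complex.I * ω * t -
          (Real.sqrt 2 : ℂ) * Complex.exp (Complex.I * π / 4) * (Real.sqrt ω : ℂ) * j)
    = 2 * Complex.I *
        ∫ x in Set.Ioi (0:ℝ),
          (x : ℂ) * Complex.exp (-(t : ℂ) * x ^ 2 - Complex.I * (Real.sqrt 2 : ℂ) * j * x) := by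
  set g : ℝ → ℂ := fun ω => Complex.exp (Complex.I*t*ω - (1+Complex.I)*j*(Real.sqrt ω : ℂ))
    with hg
  have hLHS : (∫ ω in Set.Ioi (0:ℝ),
      Complex.exp (Complex.I * ω * t -
        (Real.sqrt 2 : ℂ) * Complex.exp (Complex.I * π / 4) * (Real.sqrt ω : ℂ) * j))
      = ∫ ω in Set.Ioi (0:ℝ), g ω := by
    refine integral_congr_ae (Filter.Eventually.of_forall fun ω => ?_)
    rw [hg]
    simp only
    rw [sqrt_two_exp]
    congr 1
    ring
  have hsub := integral_comp_rpow_Ioi g (p := (2:ℝ)) two_ne_zero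
  rw [hLHS, ← hsub]
  have hstep : EqOn (fun x : ℝ => (|(2:ℝ)| * x ^ ((2:ℝ)-1)) • g (x ^ (2:ℝ)))
      (fun x : ℝ => (2:ℂ) * phi t j 0 x) (Ioi 0) := by
    intro x hx
    have hx0 : (0:ℝ) < x := hx
    simp only
    rw [show ((2:ℝ)-1) = 1 by norm_num, Real.rpow_one,
      show (2:ℝ) = ((2:ℕ):ℝ) by norm_num, Real.rpow_natCast, hg]
    simp only
    rw [Real.sqrt_sq hx0.le, phi_zero, Complex.real_smul]
    push_cast
    norm_num
    ring
  rw [setIntegral_congr_fun measurableSet_Ioi hstep, integral_const_mul,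
    G_const t j ht hj]
  have : (∫ x in Ioi (0:ℝ), phi t j (π/4) x)
      = Complex.I * ∫ x in Set.Ioi (0:ℝ),
          (x : ℂ) * Complex.exp (-(t : ℂ) * x ^ 2 - Complex.I * (Real.sqrt 2 : ℂ) * j * x) := by
    rw [← integral_const_mul]
    refine integral_congr_ae (Filter.Eventually.of_forall fun x => ?_)
    rw [phi_pi_four]
  rw [this]
  ring
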